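/- Let G be a simple connected graph with n ≥ 2 vertices and m edges, and write a_k = d(G,k). Then the Hyper-Wiener index of the Mycielskian of G is WW(μ(G)) = (1/2)(25n² − 11n) − 19m − 13a_2 − 4a_3. -/

import Mathlib

open SimpleGraph Polynomial Finset

/-- The Mycielskian `μ(G)` of a simple graph `G`. Vertices `Sum.inl v` are the original
vertices `v_i`, vertices `Sum.inr (Sum.inl v)` are the shadow vertices `u_i`, and
`Sum.inr (Sum.inr ())` is the apex vertex `w`.  Edges: the edges of `G`, the edges `w u_i`,
and the edges `u_i v_j`, `u_j v_i` for every edge `v_i v_j` of `G`. -/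
def mycielskian {V : Type*} (G : SimpleGraph V) : SimpleGraph (V ⊕ V ⊕ Unit) :=
  SimpleGraph.fromRel (fun a b =>
    match a, b with
    | Sum.inl a, Sum.inl b => G.Adj a b
    | Sum.inl a, Sum.inr (Sum.inl b) => G.Adj a b
    | Sum.inr (Sum.inl _), Sum.inr (Sum.inr _) => True
    | _, _ => False)

/-- `distCount G k` is `d(G,k)`, the number of unordered pairs of distinct vertices of `G`
whose graph distance is exactly `k`. -/
noncomputable def distCount {V : Type*} (G : SimpleGraph V) (k : ℕ) : ℕ :=
  Nat.card {e : Sym2 V // ¬ e.IsDiag ∧ Sym2.lift ⟨G.dist, fun _ _ => G.dist_comm⟩ e = k}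

/-- The Hosoya polynomial `H(G,x) = Σ_{k=1}^{D(G)} d(G,k) x^k` (with rational coefficients). -/
noncomputable def hosoya {V : Type*} (G : SimpleGraph V) : Polynomial ℚ :=
  ∑ k ∈ Finset.Icc 1 G.diam, (distCount G k : ℚ) • Polynomial.X ^ k

/-- The Wiener index `W(G)`: the sum of distances over all unordered pairs of distinct
vertices (the diagonal contributes `0`, so we may sum over ordered pairs and halve). -/
noncomputable def wiener {V : Type*} (G : SimpleGraph V) [Fintype V] : ℚ :=
  (∑ u : V, ∑ v : V, (G.dist u v : ℚ)) / 2

/-- The Hyper-Wiener index `WW(G) = (1/2) Σ_{{u,v}} (d(u,v)² + d(u,v))`. -/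
noncomputable def hyperWiener {V : Type*} (G : SimpleGraph V) [Fintype V] : ℚ :=
  (∑ u : V, ∑ v : V, ((G.dist u v : ℚ) ^ 2 + (G.dist u v : ℚ))) / 4

/-- The TSZ index `TSZ(G) = (1/6) Σ_{{u,v}} d³ + (1/2) Σ_{{u,v}} d² + (1/3) Σ_{{u,v}} d`. -/
noncomputable def tszIndex {V : Type*} (G : SimpleGraph V) [Fintype V] : ℚ :=
  (∑ u : V, ∑ v : V, (G.dist u v : ℚ) ^ 3) / 12
    + (∑ u : V, ∑ v : V, (G.dist u v : ℚ) ^ 2) / 4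
    + (∑ u : V, ∑ v : V, (G.dist u v : ℚ)) / 6

/-- The Harary index `Har(G) = Σ_{{u,v}} 1/d(u,v)` (diagonal terms are `0⁻¹ = 0`). -/
noncomputable def harary {V : Type*} (G : SimpleGraph V) [Fintype V] : ℚ :=
  (∑ u : V, ∑ v : V, ((G.dist u v : ℚ))⁻¹) / 2

/-- The closeness `C(G) = Σ_u Σ_{v ≠ u} 2^{-d(u,v)}` over ordered pairs of distinct vertices. -/
noncomputable def closeness {V : Type*} (G : SimpleGraph V) [Fintype V] : ℚ :=
  letI := Classical.decEq V
  ∑ u : V, ∑ v : V, if v = u then 0 else ((1 : ℚ) / 2) ^ (G.dist u v)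

/-- `σ_{uv}`: the number of shortest paths (walks of length `dist u v`) from `u` to `v`. -/
noncomputable def numSP {V : Type*} (G : SimpleGraph V) (u v : V) : ℕ :=
  Nat.card {p : G.Walk u v // p.length = G.dist u v}

/-- `σ_{uv}(w)`: the number of shortest paths from `u` to `v` passing through `w`. -/
noncomputable def numSPthrough {V : Type*} (G : SimpleGraph V) (w u v : V) : ℕ :=
  Nat.card {p : G.Walk u v // p.length = G.dist u v ∧ w ∈ p.support}

/-- The betweenness centrality `B_w = Σ_{{u,v}, u ≠ w ≠ v} σ_{uv}(w)/σ_{uv}` of a vertex `w`,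
summed over unordered pairs of distinct vertices (ordered pairs, halved). -/
noncomputable def btwVertex {V : Type*} (G : SimpleGraph V) [Fintype V] (w : V) : ℚ :=
  letI := Classical.decEq V
  (∑ u : V, ∑ v : V,
    if u ≠ v ∧ u ≠ w ∧ v ≠ w then (numSPthrough G w u v : ℚ) / (numSP G u v) else 0) / 2

/-- The betweenness centrality of a graph: `B⁻(G) = (1/N) Σ_w B_w`. -/
noncomputable def btw {V : Type*} (G : SimpleGraph V) [Fintype V] : ℚ :=
  (∑ w : V, btwVertex G w) / (Fintype.card V)

/-- The star graph `S_n`: center `0` joined to the `n` leaves `1, …, n`. -/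
def starGraph (n : ℕ) : SimpleGraph (Fin (n + 1)) :=
  SimpleGraph.fromRel (fun a _ => a = 0)

/-- The join `G₁ ⊕ G₂` of two graphs on disjoint vertex sets: all edges of `G₁`, all edges
of `G₂`, and all edges between `V(G₁)` and `V(G₂)`. -/
def joinGraph {V₁ V₂ : Type*} (G₁ : SimpleGraph V₁) (G₂ : SimpleGraph V₂) :
    SimpleGraph (V₁ ⊕ V₂) :=
  SimpleGraph.fromRel (fun a b =>
    match a, b with
    | Sum.inl a, Sum.inl b => G₁.Adj a b
    | Sum.inr a, Sum.inr b => G₂.Adj a b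
    | Sum.inl _, Sum.inr _ => True
    | _, _ => False)

set_option linter.unusedSectionVars false

section MycAux
variable {V : Type*} (G : SimpleGraph V)

lemma myc_ll {a b : V} : (mycielskian G).Adj (Sum.inl a) (Sum.inl b) ↔ G.Adj a b := by
  simp [mycielskian, fromRel_adj]
  constructor
  · rintro ⟨h, h1 | h1⟩ <;> [exact h1; exact h1.symm]
  · intro h; exact ⟨h.ne, Or.inl h⟩

lemma myc_lu {a b : V} : (mycielskian G).Adj (Sum.inl a) (Sum.inr (Sum.inl b)) ↔ G.Adj a b := by
  simp [mycielskian, fromRel_adj]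

lemma myc_ul {a b : V} : (mycielskian G).Adj (Sum.inr (Sum.inl a)) (Sum.inl b) ↔ G.Adj a b := by
  rw [adj_comm, myc_lu, G.adj_comm]

lemma myc_uw {a : V} {u : Unit} : (mycielskian G).Adj (Sum.inr (Sum.inl a)) (Sum.inr (Sum.inr u)) := by
  simp [mycielskian, fromRel_adj]

lemma myc_wu {a : V} {u : Unit} : (mycielskian G).Adj (Sum.inr (Sum.inr u)) (Sum.inr (Sum.inl a)) :=
  (myc_uw G).symm

lemma myc_not_lw {a : V} {u : Unit} : ¬ (mycielskian G).Adj (Sum.inl a) (Sum.inr (Sum.inr u)) := by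
  simp [mycielskian, fromRel_adj]

lemma myc_not_uu {a b : V} : ¬ (mycielskian G).Adj (Sum.inr (Sum.inl a)) (Sum.inr (Sum.inl b)) := by
  simp [mycielskian, fromRel_adj]

/-- the apex vertex -/
@[simp] def myW : V ⊕ V ⊕ Unit := Sum.inr (Sum.inr ())

/-- projection to V (apex mapped arbitrarily via h) -/
def mycProj (x : V ⊕ V ⊕ Unit) (d : V) : V :=
  match x with
  | Sum.inl a => a
  | Sum.inr (Sum.inl a) => a
  | Sum.inr (Sum.inr _) => d

variable {G}

lemma proj_walk (d : V) :
    ∀ {x y : V ⊕ V ⊕ Unit} (p : (mycielskian G).Walk x y),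
      (myW : V ⊕ V ⊕ Unit) ∉ p.support →
      ∃ q : G.Walk (mycProj x d) (mycProj y d), q.length = p.length := by
  intro x y p
  induction p with
  | nil => intro _; exact ⟨SimpleGraph.Walk.nil, rfl⟩
  | @cons a b c hab p ih =>
    intro hs
    simp only [SimpleGraph.Walk.support_cons, List.mem_cons] at hs
    push_neg at hs
    obtain ⟨ha, hs⟩ := hs
    obtain ⟨q, hq⟩ := ih hs
    have hb : (myW : V ⊕ V ⊕ Unit) ∉ p.support := hs
    have hbne : b ≠ myW := fun h => hs (h ▸ p.start_mem_support)
    have hadj : G.Adj (mycProj a d) (mycProj b d) := by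
      match a, b with
      | Sum.inl a', Sum.inl b' => exact (myc_ll G).mp hab
      | Sum.inl a', Sum.inr (Sum.inl b') => exact (myc_lu G).mp hab
      | Sum.inl a', Sum.inr (Sum.inr u) => exact absurd hab (myc_not_lw G)
      | Sum.inr (Sum.inl a'), Sum.inl b' => exact (myc_ul G).mp hab
      | Sum.inr (Sum.inl a'), Sum.inr (Sum.inl b') => exact absurd hab (myc_not_uu G)
      | Sum.inr (Sum.inl a'), Sum.inr (Sum.inr u) => exact absurd rfl hbne
      | Sum.inr (Sum.inr u), b => exact absurd rfl ha
    exact ⟨SimpleGraph.Walk.cons hadj q, by simp [hq]⟩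

/-- lift a walk of `G` to the `inl` copy in the Mycielskian -/
def liftWalk : ∀ {a b : V}, G.Walk a b → (mycielskian G).Walk (Sum.inl a) (Sum.inl b)
  | _, _, SimpleGraph.Walk.nil => SimpleGraph.Walk.nil
  | _, _, SimpleGraph.Walk.cons h p => SimpleGraph.Walk.cons ((myc_ll G).mpr h) (liftWalk p)

@[simp] lemma liftWalk_length : ∀ {a b : V} (p : G.Walk a b), (liftWalk p).length = p.length
  | _, _, SimpleGraph.Walk.nil => rfl
  | _, _, SimpleGraph.Walk.cons h p => by simp [liftWalk, liftWalk_length p]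

section Dist
variable [Fintype V] (hc : G.Connected) (hn2 : 2 ≤ Fintype.card V)

include hc hn2 in
lemma exists_nbr (a : V) : ∃ b, G.Adj a b := by
  have : Nontrivial V := Fintype.one_lt_card_iff_nontrivial.mp hn2
  obtain ⟨b, hb⟩ := exists_ne a
  have h0 : G.dist a b ≠ 0 := fun h => hb.symm ((hc.dist_eq_zero_iff).mp h)
  obtain ⟨p, hp⟩ := exists_walk_of_dist_ne_zero h0
  cases p with
  | nil => exact absurd rfl hb.symm
  | cons h q => exact ⟨_, h⟩

lemma dist_eq_two' {W : Type*} {H : SimpleGraph W} {x y : W} (hne : x ≠ y)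
    (hadj : ¬ H.Adj x y) (p : H.Walk x y) (hp : p.length = 2) : H.dist x y = 2 := by
  have hle : H.dist x y ≤ 2 := hp ▸ SimpleGraph.dist_le p
  have h0 : H.dist x y ≠ 0 := by
    intro h
    rcases SimpleGraph.dist_eq_zero_iff_eq_or_not_reachable.mp h with h' | h'
    exacts [hne h', h' ⟨p⟩]
  have h1 : H.dist x y ≠ 1 := fun h => hadj (SimpleGraph.dist_eq_one_iff_adj.mp h)
  omega

include hc hn2

lemma dist_wu (i : V) : (mycielskian G).dist myW (Sum.inr (Sum.inl i)) = 1 :=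
  SimpleGraph.dist_eq_one_iff_adj.mpr (myc_wu G)

lemma dist_wv (i : V) : (mycielskian G).dist myW (Sum.inl i) = 2 := by
  obtain ⟨k, hk⟩ := exists_nbr hc hn2 i
  exact dist_eq_two' (by simp) (fun h => myc_not_lw G h.symm)
    (SimpleGraph.Walk.cons (myc_wu G) (SimpleGraph.Walk.cons ((myc_ul G).mpr hk.symm)
      SimpleGraph.Walk.nil)) (by simp)

lemma dist_uu {i j : V} (hij : i ≠ j) :
    (mycielskian G).dist (Sum.inr (Sum.inl i)) (Sum.inr (Sum.inl j)) = 2 :=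
  dist_eq_two' (by simp [hij]) (myc_not_uu G)
    (SimpleGraph.Walk.cons (myc_uw G (u := ())) (SimpleGraph.Walk.cons (myc_wu G)
      SimpleGraph.Walk.nil)) (by simp)

lemma dist_uv_self (i : V) :
    (mycielskian G).dist (Sum.inr (Sum.inl i)) (Sum.inl i) = 2 := by
  obtain ⟨k, hk⟩ := exists_nbr hc hn2 i
  exact dist_eq_two' (by simp) (by simp [myc_ul])
    (SimpleGraph.Walk.cons ((myc_ul G).mpr hk) (SimpleGraph.Walk.cons
      ((myc_ll G).mpr hk.symm) SimpleGraph.Walk.nil)) (by simp)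


lemma dist_uv {i j : V} (hij : i ≠ j) :
    (mycielskian G).dist (Sum.inr (Sum.inl i)) (Sum.inl j) = min (G.dist i j) 3 := by
  classical
  obtain ⟨l, hl⟩ := exists_nbr hc hn2 j
  -- length-3 walk u_i → w → u_l → v_j
  let w3 : (mycielskian G).Walk (Sum.inr (Sum.inl i)) (Sum.inl j) :=
    SimpleGraph.Walk.cons (myc_uw G (u := ()))
      (SimpleGraph.Walk.cons (myc_wu G)
        (SimpleGraph.Walk.cons ((myc_ul G).mpr hl.symm) SimpleGraph.Walk.nil))
  have h3 : (mycielskian G).dist (Sum.inr (Sum.inl i)) (Sum.inl j) ≤ 3 := by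
    have := SimpleGraph.dist_le w3
    simpa [w3] using this
  -- length-(dist i j) walk
  have hd0 : G.dist i j ≠ 0 := fun h => hij (hc.dist_eq_zero_iff.mp h)
  obtain ⟨p, hp⟩ := exists_walk_of_dist_ne_zero hd0
  have hdle : (mycielskian G).dist (Sum.inr (Sum.inl i)) (Sum.inl j) ≤ G.dist i j := by
    cases p with
    | nil => exact absurd rfl hij
    | @cons _ b _ h q =>
      have := SimpleGraph.dist_le
        (SimpleGraph.Walk.cons ((myc_ul G).mpr h) (liftWalk q))
      simp only [SimpleGraph.Walk.length_cons, liftWalk_length] at this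
      simp only [SimpleGraph.Walk.length_cons] at hp
      omega
  have hub : (mycielskian G).dist (Sum.inr (Sum.inl i)) (Sum.inl j) ≤ min (G.dist i j) 3 :=
    le_min hdle h3
  refine le_antisymm hub ?_
  -- lower bound
  have hne : (Sum.inr (Sum.inl i) : V ⊕ V ⊕ Unit) ≠ Sum.inl j := by simp
  have hdd0 : (mycielskian G).dist (Sum.inr (Sum.inl i)) (Sum.inl j) ≠ 0 := by
    intro h
    rcases SimpleGraph.dist_eq_zero_iff_eq_or_not_reachable.mp h with h' | h'
    exacts [hne h', h' ⟨w3⟩]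
  obtain ⟨q, hq⟩ := exists_walk_of_dist_ne_zero hdd0
  rw [min_le_iff]
  rcases Classical.em ((myW : V ⊕ V ⊕ Unit) ∈ q.support) with hw | hw
  · -- through w : length ≥ 1 + 2
    have hsplit := q.take_spec hw
    have hlen : (q.takeUntil myW hw).length + (q.dropUntil myW hw).length = q.length := by
      rw [← SimpleGraph.Walk.length_append, hsplit]
    have h1 : 1 ≤ (q.takeUntil myW hw).length := by
      have := SimpleGraph.dist_le (q.takeUntil myW hw)
      have hd : (mycielskian G).dist (Sum.inr (Sum.inl i)) myW = 1 := by
        rw [SimpleGraph.dist_comm]; exact dist_wu hc hn2 i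
      omega
    have h2 : 2 ≤ (q.dropUntil myW hw).length := by
      have := SimpleGraph.dist_le (q.dropUntil myW hw)
      have hd : (mycielskian G).dist myW (Sum.inl j) = 2 := dist_wv hc hn2 j
      omega
    exact Or.inr (by omega)
  · obtain ⟨r, hr⟩ := proj_walk i q hw
    have : G.dist i j ≤ q.length := by rw [← hr]; exact SimpleGraph.dist_le r
    exact Or.inl (by omega)

lemma dist_vv {i j : V} (hij : i ≠ j) :
    (mycielskian G).dist (Sum.inl i) (Sum.inl j) = min (G.dist i j) 4 := by
  classical
  obtain ⟨k, hk⟩ := exists_nbr hc hn2 i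
  obtain ⟨l, hl⟩ := exists_nbr hc hn2 j
  let w4 : (mycielskian G).Walk (Sum.inl i) (Sum.inl j) :=
    SimpleGraph.Walk.cons ((myc_lu G).mpr hk)
      (SimpleGraph.Walk.cons (myc_uw G (u := ()))
        (SimpleGraph.Walk.cons (myc_wu G)
          (SimpleGraph.Walk.cons ((myc_ul G).mpr hl.symm) SimpleGraph.Walk.nil)))
  have h4 : (mycielskian G).dist (Sum.inl i) (Sum.inl j) ≤ 4 := by
    have := SimpleGraph.dist_le w4
    simpa [w4] using this
  have hd0 : G.dist i j ≠ 0 := fun h => hij (hc.dist_eq_zero_iff.mp h)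
  obtain ⟨p, hp⟩ := exists_walk_of_dist_ne_zero hd0
  have hdle : (mycielskian G).dist (Sum.inl i) (Sum.inl j) ≤ G.dist i j := by
    have := SimpleGraph.dist_le (liftWalk p)
    simpa [hp] using this
  refine le_antisymm (le_min hdle h4) ?_
  have hne : (Sum.inl i : V ⊕ V ⊕ Unit) ≠ Sum.inl j := by simp [hij]
  have hdd0 : (mycielskian G).dist (Sum.inl i) (Sum.inl j) ≠ 0 := by
    intro h
    rcases SimpleGraph.dist_eq_zero_iff_eq_or_not_reachable.mp h with h' | h'
    exacts [hne h', h' ⟨w4⟩]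
  obtain ⟨q, hq⟩ := exists_walk_of_dist_ne_zero hdd0
  rw [min_le_iff]
  rcases Classical.em ((myW : V ⊕ V ⊕ Unit) ∈ q.support) with hw | hw
  · have hsplit := q.take_spec hw
    have hlen : (q.takeUntil myW hw).length + (q.dropUntil myW hw).length = q.length := by
      rw [← SimpleGraph.Walk.length_append, hsplit]
    have h1 : 2 ≤ (q.takeUntil myW hw).length := by
      have := SimpleGraph.dist_le (q.takeUntil myW hw)
      have hd : (mycielskian G).dist (Sum.inl i) myW = 2 := by
        rw [SimpleGraph.dist_comm]; exact dist_wv hc hn2 i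
      omega
    have h2 : 2 ≤ (q.dropUntil myW hw).length := by
      have := SimpleGraph.dist_le (q.dropUntil myW hw)
      have hd : (mycielskian G).dist myW (Sum.inl j) = 2 := dist_wv hc hn2 j
      omega
    exact Or.inr (by omega)
  · obtain ⟨r, hr⟩ := proj_walk i q hw
    have : G.dist i j ≤ q.length := by rw [← hr]; exact SimpleGraph.dist_le r
    exact Or.inl (by omega)

end Dist


section Count
variable [Fintype V] [DecidableEq V] [DecidableRel G.Adj]

lemma sum_ind_adj (m : ℕ) (hm : Nat.card G.edgeSet = m) :
    ∑ i : V, ∑ j : V, (if G.Adj i j then (1:ℚ) else 0) = 2 * m := by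
  have h2 := G.two_mul_card_edgeFinset
  have hcard : Nat.card G.edgeSet = #G.edgeFinset := by
    rw [Nat.card_eq_fintype_card, G.edgeFinset_card]
  rw [← Finset.sum_product', Finset.univ_product_univ]
  have hb : ∑ p ∈ (univ : Finset (V × V)), (if G.Adj p.1 p.2 then (1:ℚ) else 0)
      = (#(univ.filter (fun p : V × V => G.Adj p.1 p.2)) : ℚ) := by
    rw [Finset.sum_boole]
  rw [hb]
  have key : #(Finset.filter (fun p : V × V => G.Adj p.1 p.2) univ) = 2 * m := by
    calc #(Finset.filter (fun p : V × V => G.Adj p.1 p.2) univ)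
        = #(univ.filter fun (x, y) => G.Adj x y) := rfl
      _ = 2 * #G.edgeFinset := h2.symm
      _ = 2 * m := by rw [← hm, hcard]
  rw [key]; push_cast; ring

lemma sum_ind_dist (k : ℕ) :
    ∑ i : V, ∑ j : V, (if G.dist i j = k ∧ i ≠ j then (1:ℚ) else 0)
      = 2 * distCount G k := by
  classical
  rw [← Finset.sum_product', Finset.univ_product_univ, Finset.sum_boole]
  set T : Finset (V × V) := univ.filter (fun p : V × V => G.dist p.1 p.2 = k ∧ p.1 ≠ p.2)
    with hT
  set S : Finset (Sym2 V) := univ.filter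
    (fun e : Sym2 V => ¬ e.IsDiag ∧ Sym2.lift ⟨G.dist, fun _ _ => G.dist_comm⟩ e = k) with hS
  have hSc : distCount G k = #S := by
    rw [distCount, Nat.card_eq_fintype_card, Fintype.card_subtype]
  have hmap : ∀ p ∈ T, s(p.1, p.2) ∈ S := by
    rintro ⟨a, b⟩ hp
    simp only [hT, Finset.mem_filter, Finset.mem_univ, true_and] at hp
    simp only [hS, Finset.mem_filter, Finset.mem_univ, true_and]
    constructor
    · simpa using hp.2
    · simpa using hp.1
  have hcardT : #T = ∑ e ∈ S, #(T.filter (fun p => s(p.1, p.2) = e)) :=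
    Finset.card_eq_sum_card_fiberwise hmap
  have hfiber : ∀ e ∈ S, #(T.filter (fun p => s(p.1, p.2) = e)) = 2 := by
    intro e he
    induction e with
    | _ a b =>
      simp only [hS, Finset.mem_filter, Finset.mem_univ, true_and] at he
      have hab : a ≠ b := by simpa using he.1
      have hd : G.dist a b = k := by simpa using he.2
      have : T.filter (fun p => s(p.1, p.2) = s(a, b)) = {(a, b), (b, a)} := by
        ext ⟨x, y⟩
        simp only [Finset.mem_filter, hT, Finset.mem_univ, true_and, Finset.mem_insert,
          Finset.mem_singleton, Prod.mk.injEq, Sym2.mk_eq_mk_iff]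
        constructor
        · rintro ⟨-, h⟩
          simpa [Sym2.eq_iff] using h
        · rintro (⟨rfl, rfl⟩ | ⟨rfl, rfl⟩)
          · exact ⟨⟨hd, hab⟩, by simp⟩
          · exact ⟨⟨by rwa [G.dist_comm], hab.symm⟩, by simp⟩
      rw [this]
      rw [Finset.card_insert_of_notMem (by simp [hab]), Finset.card_singleton]
  have : #T = 2 * #S := by
    rw [hcardT, Finset.sum_congr rfl hfiber, Finset.sum_const, smul_eq_mul, mul_comm]
  rw [this, hSc]
  push_cast; ring

end Count

section IndSums
variable (V) [Fintype V] [DecidableEq V]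

lemma sum_ind_ne : ∑ i : V, ∑ j : V, (if i ≠ j then (1:ℚ) else 0)
    = (Fintype.card V : ℚ)^2 - Fintype.card V := by
  have h : ∀ i j : V, (if i ≠ j then (1:ℚ) else 0) = 1 - (if i = j then 1 else 0) := by
    intro i j; by_cases h : i = j <;> simp [h]
  simp only [h, Finset.sum_sub_distrib, Finset.sum_const, Finset.sum_ite_eq,
    Finset.mem_univ, if_true, nsmul_eq_mul, mul_one, Finset.card_univ]
  ring

lemma sum_ind_eq : ∑ i : V, ∑ j : V, (if i = j then (1:ℚ) else 0) = (Fintype.card V : ℚ) := by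
  simp [Finset.sum_ite_eq, Finset.card_univ]

end IndSums

section Blocks
variable [Fintype V] [DecidableEq V] [DecidableRel G.Adj]

variable (hc : G.Connected) (hn2 : 2 ≤ Fintype.card V)
include hc hn2

lemma block_vv (m : ℕ) (hm : Nat.card G.edgeSet = m) :
    ∑ i : V, ∑ j : V, (((mycielskian G).dist (Sum.inl i) (Sum.inl j) : ℚ)^2
        + ((mycielskian G).dist (Sum.inl i) (Sum.inl j) : ℚ))
      = 20*((Fintype.card V : ℚ)^2 - Fintype.card V) - 36*m
        - 28*(distCount G 2) - 16*(distCount G 3) := by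
  have key : ∀ i j : V, (((mycielskian G).dist (Sum.inl i) (Sum.inl j) : ℚ)^2
        + ((mycielskian G).dist (Sum.inl i) (Sum.inl j) : ℚ))
      = 20 * (if i ≠ j then (1:ℚ) else 0) - 18 * (if G.Adj i j then (1:ℚ) else 0)
        - 14 * (if G.dist i j = 2 ∧ i ≠ j then (1:ℚ) else 0)
        - 8 * (if G.dist i j = 3 ∧ i ≠ j then (1:ℚ) else 0) := by
    intro i j
    by_cases hij : i = j
    · subst hij
      simp [SimpleGraph.dist_self]
    · rw [dist_vv hc hn2 hij]
      simp only [← SimpleGraph.dist_eq_one_iff_adj]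
      have hd1 : 1 ≤ G.dist i j :=
        Nat.one_le_iff_ne_zero.mpr (fun h => hij (hc.dist_eq_zero_iff.mp h))
      rcases Nat.lt_or_ge (G.dist i j) 4 with h4 | h4
      · interval_cases h : (G.dist i j) <;> simp [hij, h] <;> norm_num
      · have hmin : min (G.dist i j) 4 = 4 := min_eq_right h4
        have h1 : G.dist i j ≠ 1 := by omega
        have h2 : G.dist i j ≠ 2 := by omega
        have h3 : G.dist i j ≠ 3 := by omega
        simp [hij, hmin, h1, h2, h3]
        norm_num
  calc ∑ i : V, ∑ j : V, (((mycielskian G).dist (Sum.inl i) (Sum.inl j) : ℚ)^2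
        + ((mycielskian G).dist (Sum.inl i) (Sum.inl j) : ℚ))
      = ∑ i : V, ∑ j : V, (20 * (if i ≠ j then (1:ℚ) else 0)
          - 18 * (if G.Adj i j then (1:ℚ) else 0)
          - 14 * (if G.dist i j = 2 ∧ i ≠ j then (1:ℚ) else 0)
          - 8 * (if G.dist i j = 3 ∧ i ≠ j then (1:ℚ) else 0)) := by
        exact Finset.sum_congr rfl fun i _ => Finset.sum_congr rfl fun j _ => key i j
    _ = 20*((Fintype.card V : ℚ)^2 - Fintype.card V) - 36*m
        - 28*(distCount G 2) - 16*(distCount G 3) := by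
        simp only [Finset.sum_sub_distrib, ← Finset.mul_sum]
        rw [sum_ind_ne V, sum_ind_adj m hm, sum_ind_dist (G := G) 2, sum_ind_dist (G := G) 3]
        ring

lemma block_uv (m : ℕ) (hm : Nat.card G.edgeSet = m) :
    ∑ i : V, ∑ j : V, (((mycielskian G).dist (Sum.inr (Sum.inl i)) (Sum.inl j) : ℚ)^2
        + ((mycielskian G).dist (Sum.inr (Sum.inl i)) (Sum.inl j) : ℚ))
      = 6*(Fintype.card V : ℚ) + 12*((Fintype.card V : ℚ)^2 - Fintype.card V)
        - 20*m - 12*(distCount G 2) := by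
  have key : ∀ i j : V, (((mycielskian G).dist (Sum.inr (Sum.inl i)) (Sum.inl j) : ℚ)^2
        + ((mycielskian G).dist (Sum.inr (Sum.inl i)) (Sum.inl j) : ℚ))
      = 6 * (if i = j then (1:ℚ) else 0) + 12 * (if i ≠ j then (1:ℚ) else 0)
        - 10 * (if G.Adj i j then (1:ℚ) else 0)
        - 6 * (if G.dist i j = 2 ∧ i ≠ j then (1:ℚ) else 0) := by
    intro i j
    by_cases hij : i = j
    · subst hij
      rw [dist_uv_self hc hn2 i]
      simp
      norm_num
    · rw [dist_uv hc hn2 hij]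
      simp only [← SimpleGraph.dist_eq_one_iff_adj]
      have hd1 : 1 ≤ G.dist i j :=
        Nat.one_le_iff_ne_zero.mpr (fun h => hij (hc.dist_eq_zero_iff.mp h))
      rcases Nat.lt_or_ge (G.dist i j) 3 with h3 | h3
      · interval_cases h : (G.dist i j) <;> simp [hij, h] <;> norm_num
      · have hmin : min (G.dist i j) 3 = 3 := min_eq_right h3
        have h1 : G.dist i j ≠ 1 := by omega
        have h2 : G.dist i j ≠ 2 := by omega
        simp [hij, hmin, h1, h2]
        norm_num
  calc ∑ i : V, ∑ j : V, (((mycielskian G).dist (Sum.inr (Sum.inl i)) (Sum.inl j) : ℚ)^2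
        + ((mycielskian G).dist (Sum.inr (Sum.inl i)) (Sum.inl j) : ℚ))
      = ∑ i : V, ∑ j : V, (6 * (if i = j then (1:ℚ) else 0)
          + 12 * (if i ≠ j then (1:ℚ) else 0)
          - 10 * (if G.Adj i j then (1:ℚ) else 0)
          - 6 * (if G.dist i j = 2 ∧ i ≠ j then (1:ℚ) else 0)) :=
        Finset.sum_congr rfl fun i _ => Finset.sum_congr rfl fun j _ => key i j
    _ = 6*(Fintype.card V : ℚ) + 12*((Fintype.card V : ℚ)^2 - Fintype.card V)
        - 20*m - 12*(distCount G 2) := by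
        simp only [Finset.sum_sub_distrib, Finset.sum_add_distrib, ← Finset.mul_sum]
        rw [sum_ind_ne V, sum_ind_eq V, sum_ind_adj m hm, sum_ind_dist (G := G) 2]
        ring

lemma block_vu (m : ℕ) (hm : Nat.card G.edgeSet = m) :
    ∑ i : V, ∑ j : V, (((mycielskian G).dist (Sum.inl i) (Sum.inr (Sum.inl j)) : ℚ)^2
        + ((mycielskian G).dist (Sum.inl i) (Sum.inr (Sum.inl j)) : ℚ))
      = 6*(Fintype.card V : ℚ) + 12*((Fintype.card V : ℚ)^2 - Fintype.card V)
        - 20*m - 12*(distCount G 2) := by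
  have := block_uv hc hn2 m hm
  rw [Finset.sum_comm] at this
  convert this using 3 with j _ i _
  rw [SimpleGraph.dist_comm]

lemma block_uu :
    ∑ i : V, ∑ j : V, (((mycielskian G).dist (Sum.inr (Sum.inl i)) (Sum.inr (Sum.inl j)) : ℚ)^2
        + ((mycielskian G).dist (Sum.inr (Sum.inl i)) (Sum.inr (Sum.inl j)) : ℚ))
      = 6*((Fintype.card V : ℚ)^2 - Fintype.card V) := by
  have key : ∀ i j : V, (((mycielskian G).dist (Sum.inr (Sum.inl i)) (Sum.inr (Sum.inl j)) : ℚ)^2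
        + ((mycielskian G).dist (Sum.inr (Sum.inl i)) (Sum.inr (Sum.inl j)) : ℚ))
      = 6 * (if i ≠ j then (1:ℚ) else 0) := by
    intro i j
    by_cases hij : i = j
    · subst hij; simp [SimpleGraph.dist_self]
    · rw [dist_uu hc hn2 hij]; simp [hij]; norm_num
  rw [Finset.sum_congr rfl fun i _ => Finset.sum_congr rfl fun j _ => key i j]
  simp only [← Finset.mul_sum]
  rw [sum_ind_ne V]

end Blocks
end MycAux

/-- For a connected graph `G` with `n ≥ 2` vertices and `m` edges, with
`a_k = d(G,k)`, the Hyper-Wiener index of `μ(G)` is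
`(1/2)(25n² - 11n) - 19m - 13a₂ - 4a₃`. -/
theorem stmt_9 {V : Type*} [Fintype V] (G : SimpleGraph V) (n m : ℕ)
    (hn : Fintype.card V = n) (hn2 : 2 ≤ n) (hm : Nat.card G.edgeSet = m)
    (hc : G.Connected) :
    hyperWiener (mycielskian G) =
      (25 * (n : ℚ) ^ 2 - 11 * n) / 2 - 19 * m - 13 * distCount G 2 - 4 * distCount G 3 := by
  classical
  subst hn
  set n := Fintype.card V with hn
  have hn2' : 2 ≤ Fintype.card V := hn2
  rw [hyperWiener]
  have expand : ∀ (f : V ⊕ V ⊕ Unit → ℚ), ∑ x : V ⊕ V ⊕ Unit, f x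
      = ∑ i : V, f (Sum.inl i) + ∑ i : V, f (Sum.inr (Sum.inl i)) + f (Sum.inr (Sum.inr ())) := by
    intro f
    simp [Fintype.sum_sum_type, Fintype.sum_unique, add_assoc]
  simp only [expand]
  have split3 : ∀ (f g c : V → ℚ), ∑ i : V, (f i + g i + c i)
      = ∑ i : V, f i + ∑ i : V, g i + ∑ i : V, c i := by
    intro f g c
    rw [Finset.sum_add_distrib, Finset.sum_add_distrib]
  rw [split3, split3]
  rw [block_vv hc hn2' m hm, block_vu hc hn2' m hm, block_uv hc hn2' m hm, block_uu hc hn2']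
  have hvw : ∑ i : V, (((mycielskian G).dist (Sum.inl i) (Sum.inr (Sum.inr ())) : ℚ)^2
      + ((mycielskian G).dist (Sum.inl i) (Sum.inr (Sum.inr ())) : ℚ)) = 6 * n := by
    have key : ∀ i : V, (mycielskian G).dist (Sum.inl i) (Sum.inr (Sum.inr ())) = 2 := by
      intro i; rw [SimpleGraph.dist_comm]; exact dist_wv hc hn2' i
    simp [key]; ring
  have hwv : ∑ i : V, (((mycielskian G).dist (Sum.inr (Sum.inr ())) (Sum.inl i) : ℚ)^2
      + ((mycielskian G).dist (Sum.inr (Sum.inr ())) (Sum.inl i) : ℚ)) = 6 * n := by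
    have key : ∀ i : V, (mycielskian G).dist (Sum.inr (Sum.inr ())) (Sum.inl i) = 2 :=
      fun i => dist_wv hc hn2' i
    simp [key]; ring
  have huw : ∑ i : V, (((mycielskian G).dist (Sum.inr (Sum.inl i)) (Sum.inr (Sum.inr ())) : ℚ)^2
      + ((mycielskian G).dist (Sum.inr (Sum.inl i)) (Sum.inr (Sum.inr ())) : ℚ)) = 2 * n := by
    have key : ∀ i : V, (mycielskian G).dist (Sum.inr (Sum.inl i)) (Sum.inr (Sum.inr ())) = 1 := by
      intro i; rw [SimpleGraph.dist_comm]; exact dist_wu hc hn2' i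
    simp [key]; try rw [← hn]
    try ring
  have hwu : ∑ i : V, (((mycielskian G).dist (Sum.inr (Sum.inr ())) (Sum.inr (Sum.inl i)) : ℚ)^2
      + ((mycielskian G).dist (Sum.inr (Sum.inr ())) (Sum.inr (Sum.inl i)) : ℚ)) = 2 * n := by
    have key : ∀ i : V, (mycielskian G).dist (Sum.inr (Sum.inr ())) (Sum.inr (Sum.inl i)) = 1 :=
      fun i => dist_wu hc hn2' i
    simp [key]; try rw [← hn]
    try ring
  have hww : (mycielskian G).dist (Sum.inr (Sum.inr ())) (Sum.inr (Sum.inr ())) = 0 :=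
    by simp
  rw [hvw, hwv, huw, hwu, hww]
  rw [← hn]
  push_cast
  have hcast : (2:ℚ) ≤ n := by exact_mod_cast hn2
  field_simp
  ring
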